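/- Let Q be a finite set of states, A a finite nonempty set of actions, G ⊆ Q a goal set, and H ∈ ℕ a horizon. Let P, P̂ : Q × A × Q → ℝ be substochastic transition functions (nonnegative with row sums at most 1), with Σ_{q′ ∈ Q} |P(q,a,q′) − P̂(q,a,q′)| ≤ δ for all q, a and some δ ≥ 0. Define V̂ by the recursion V̂_H(q) = 1_G(q), V̂_k(q) = 1_G(q) + 1_{Q∖G}(q)·max_{a} Σ_{q′} V̂_{k+1}(q′) P̂(q,a,q′); define V analogously with P; and define the greedy-policy value W by W_H(q) = 1_G(q), W_k(q) = 1_G(q) + 1_{Q∖G}(q)·Σ_{q′} W_{k+1}(q′) P(q, σ_k(q), q′), where σ_k : Q → A satisfies Σ_{q′} V̂_{k+1}(q′) P̂(q, σ_k(q), q′) = max_{a} Σ_{q′} V̂_{k+1}(q′) P̂(q,a,q′) for all q. Then for every k ∈ {0,…,H} and every q ∈ Q: |W_k(q) − V_k(q)| ≤ 2(H − k)·δ. -/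
import Mathlib




/-- Finite-horizon dynamic-programming value function for maximal probability of
reaching the goal set `G` within a given number of remaining steps: `mdpVal P G j q`
is `V_k q` where `j = H - k` is the number of remaining steps. -/
noncomputable def mdpVal {Q A : Type*} [Fintype Q] [Fintype A] [Nonempty A]
    (P : Q → A → Q → ℝ) (G : Set Q) : ℕ → Q → ℝ
  | 0 => fun q => Set.indicator G (fun _ => (1 : ℝ)) q
  | j + 1 => fun q =>
      Set.indicator G (fun _ => (1 : ℝ)) q +
        Set.indicator Gᶜ (fun _ => (1 : ℝ)) q *
          Finset.univ.sup' Finset.univ_nonempty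
            (fun a => ∑ q', mdpVal P G j q' * P q a q')

/-- Value of the time-dependent policy `σ` under kernel `P` for horizon `H`:
`polVal P G σ H j q` is `W_k q` where `j = H - k` is the number of remaining steps,
so the action used at `q` with `j + 1` steps remaining is `σ (H - (j+1)) q`. -/
noncomputable def polVal {Q A : Type*} [Fintype Q]
    (P : Q → A → Q → ℝ) (G : Set Q) (σ : ℕ → Q → A) (H : ℕ) : ℕ → Q → ℝ
  | 0 => fun q => Set.indicator G (fun _ => (1 : ℝ)) q
  | j + 1 => fun q =>
      Set.indicator G (fun _ => (1 : ℝ)) q +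
        Set.indicator Gᶜ (fun _ => (1 : ℝ)) q *
          ∑ q', polVal P G σ H j q' * P q (σ (H - (j + 1)) q) q'


section Aux

variable {Q A : Type*} [Fintype Q] [Fintype A] [Nonempty A]

lemma sup'_abs_bound (F G : A → ℝ) (c : ℝ) (h : ∀ a, |F a - G a| ≤ c) :
    |Finset.univ.sup' Finset.univ_nonempty F - Finset.univ.sup' Finset.univ_nonempty G| ≤ c := by
  rw [abs_sub_le_iff]
  constructor
  · rw [sub_le_iff_le_add]
    apply Finset.sup'_le
    intro a _
    have := (abs_sub_le_iff.mp (h a)).1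
    have h2 : F a ≤ G a + c := by linarith
    exact h2.trans (by
      have := Finset.le_sup' G (Finset.mem_univ a); linarith)
  · rw [sub_le_iff_le_add]
    apply Finset.sup'_le
    intro a _
    have := (abs_sub_le_iff.mp (h a)).2
    have h2 : G a ≤ F a + c := by linarith
    exact h2.trans (by
      have := Finset.le_sup' F (Finset.mem_univ a); linarith)

lemma sum_pert_bound (p ph f g : Q → ℝ) (c δ : ℝ) (hc : 0 ≤ c)
    (hp0 : ∀ q, 0 ≤ p q) (hp1 : ∑ q, p q ≤ 1)
    (hTV : ∑ q, |p q - ph q| ≤ δ)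
    (hg : ∀ q, |g q| ≤ 1) (hfg : ∀ q, |f q - g q| ≤ c) :
    |∑ q, f q * p q - ∑ q, g q * ph q| ≤ c + δ := by
  have heq : ∑ q, f q * p q - ∑ q, g q * ph q
      = ∑ q, ((f q - g q) * p q + g q * (p q - ph q)) := by
    rw [← Finset.sum_sub_distrib]
    exact Finset.sum_congr rfl (fun q _ => by ring)
  rw [heq]
  calc |∑ q, ((f q - g q) * p q + g q * (p q - ph q))|
      ≤ ∑ q, |(f q - g q) * p q + g q * (p q - ph q)| := Finset.abs_sum_le_sum_abs _ _
    _ ≤ ∑ q, (c * p q + |p q - ph q|) := by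
        apply Finset.sum_le_sum
        intro q _
        calc |(f q - g q) * p q + g q * (p q - ph q)|
            ≤ |(f q - g q) * p q| + |g q * (p q - ph q)| := abs_add_le _ _
          _ = |f q - g q| * |p q| + |g q| * |p q - ph q| := by rw [abs_mul, abs_mul]
          _ ≤ c * p q + 1 * |p q - ph q| := by
              have h1 : |f q - g q| * |p q| ≤ c * p q := by
                rw [abs_of_nonneg (hp0 q)]
                exact mul_le_mul_of_nonneg_right (hfg q) (hp0 q)
              have h2 : |g q| * |p q - ph q| ≤ 1 * |p q - ph q| :=
                mul_le_mul_of_nonneg_right (hg q) (abs_nonneg _)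
              linarith
          _ = c * p q + |p q - ph q| := by ring
    _ = c * (∑ q, p q) + ∑ q, |p q - ph q| := by
        rw [Finset.sum_add_distrib, Finset.mul_sum]
    _ ≤ c * 1 + δ := by gcongr
    _ = c + δ := by ring

lemma mdpVal_mem (P : Q → A → Q → ℝ) (G : Set Q)
    (hP0 : ∀ q a q', 0 ≤ P q a q') (hP1 : ∀ q a, ∑ q', P q a q' ≤ 1) :
    ∀ j q, 0 ≤ mdpVal P G j q ∧ mdpVal P G j q ≤ 1 := by
  intro j
  induction j with
  | zero =>
    intro q
    by_cases hq : q ∈ G <;> simp [mdpVal, Set.indicator, hq]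
  | succ j ih =>
    intro q
    by_cases hq : q ∈ G
    · simp [mdpVal, Set.indicator, hq]
    · have hsup_le : Finset.univ.sup' Finset.univ_nonempty
          (fun a => ∑ q', mdpVal P G j q' * P q a q') ≤ 1 := by
        apply Finset.sup'_le
        intro a _
        calc ∑ q', mdpVal P G j q' * P q a q'
            ≤ ∑ q', 1 * P q a q' := by
              apply Finset.sum_le_sum; intro q' _
              exact mul_le_mul_of_nonneg_right (ih q').2 (hP0 q a q')
          _ = ∑ q', P q a q' := by simp
          _ ≤ 1 := hP1 q a
      have hsup_ge : 0 ≤ Finset.univ.sup' Finset.univ_nonempty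
          (fun a => ∑ q', mdpVal P G j q' * P q a q') := by
        obtain ⟨a⟩ := ‹Nonempty A›
        refine le_trans ?_ (Finset.le_sup' _ (Finset.mem_univ a))
        exact Finset.sum_nonneg fun q' _ => mul_nonneg (ih q').1 (hP0 q a q')
      simp only [mdpVal, Set.indicator, hq, if_false]
      simp only [Set.mem_compl_iff, hq, not_false_iff, if_true]
      constructor <;> nlinarith

lemma polVal_mem (P : Q → A → Q → ℝ) (G : Set Q) (σ : ℕ → Q → A) (H : ℕ)
    (hP0 : ∀ q a q', 0 ≤ P q a q') (hP1 : ∀ q a, ∑ q', P q a q' ≤ 1) :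
    ∀ j q, 0 ≤ polVal P G σ H j q ∧ polVal P G σ H j q ≤ 1 := by
  intro j
  induction j with
  | zero =>
    intro q
    by_cases hq : q ∈ G <;> simp [polVal, Set.indicator, hq]
  | succ j ih =>
    intro q
    by_cases hq : q ∈ G
    · simp [polVal, Set.indicator, hq]
    · set a := σ (H - (j + 1)) q
      have h1 : ∑ q', polVal P G σ H j q' * P q a q' ≤ 1 := by
        calc ∑ q', polVal P G σ H j q' * P q a q'
            ≤ ∑ q', 1 * P q a q' := by
              apply Finset.sum_le_sum; intro q' _
              exact mul_le_mul_of_nonneg_right (ih q').2 (hP0 q a q')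
          _ = ∑ q', P q a q' := by simp
          _ ≤ 1 := hP1 q a
      have h0 : 0 ≤ ∑ q', polVal P G σ H j q' * P q a q' :=
        Finset.sum_nonneg fun q' _ => mul_nonneg (ih q').1 (hP0 q a q')
      simp only [polVal, Set.indicator, hq, if_false]
      simp only [Set.mem_compl_iff, hq, not_false_iff, if_true]
      constructor <;> nlinarith

end Aux

section Main

variable {Q A : Type*} [Fintype Q] [Fintype A] [Nonempty A]

lemma mdpVal_close (P Phat : Q → A → Q → ℝ) (G : Set Q)
    (hP0 : ∀ q a q', 0 ≤ P q a q') (hP1 : ∀ q a, ∑ q', P q a q' ≤ 1)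
    (hPh0 : ∀ q a q', 0 ≤ Phat q a q') (hPh1 : ∀ q a, ∑ q', Phat q a q' ≤ 1)
    (δ : ℝ) (hδ : 0 ≤ δ)
    (hTV : ∀ q a, ∑ q', |P q a q' - Phat q a q'| ≤ δ) :
    ∀ j q, |mdpVal P G j q - mdpVal Phat G j q| ≤ (j : ℝ) * δ := by
  intro j
  induction j with
  | zero => intro q; simp [mdpVal]
  | succ j ih =>
    intro q
    by_cases hq : q ∈ G
    · simp only [mdpVal, Set.indicator, hq, if_true, Set.mem_compl_iff, not_true_eq_false,
        if_false, zero_mul, add_zero, sub_self, abs_zero]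
      positivity
    · simp only [mdpVal, Set.indicator, hq, if_false, Set.mem_compl_iff, not_false_iff,
        if_true, zero_add, one_mul]
      have hb : |Finset.univ.sup' Finset.univ_nonempty
            (fun a => ∑ q', mdpVal P G j q' * P q a q') -
          Finset.univ.sup' Finset.univ_nonempty
            (fun a => ∑ q', mdpVal Phat G j q' * Phat q a q')| ≤ (j : ℝ) * δ + δ := by
        apply sup'_abs_bound
        intro a
        apply sum_pert_bound _ _ _ _ _ _ (by positivity) (hP0 q a) (hP1 q a) (hTV q a)
        · intro q'
          have := mdpVal_mem Phat G hPh0 hPh1 j q'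
          rw [abs_of_nonneg this.1]; exact this.2
        · exact ih
      calc _ ≤ (j : ℝ) * δ + δ := hb
        _ = ((j + 1 : ℕ) : ℝ) * δ := by push_cast; ring

lemma polVal_close (P Phat : Q → A → Q → ℝ) (G : Set Q) (H : ℕ)
    (hP0 : ∀ q a q', 0 ≤ P q a q') (hP1 : ∀ q a, ∑ q', P q a q' ≤ 1)
    (hPh0 : ∀ q a q', 0 ≤ Phat q a q') (hPh1 : ∀ q a, ∑ q', Phat q a q' ≤ 1)
    (δ : ℝ) (hδ : 0 ≤ δ)
    (hTV : ∀ q a, ∑ q', |P q a q' - Phat q a q'| ≤ δ)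
    (σ : ℕ → Q → A)
    (hgreedy : ∀ k < H, ∀ q,
        ∑ q', mdpVal Phat G (H - (k + 1)) q' * Phat q (σ k q) q' =
          Finset.univ.sup' Finset.univ_nonempty
            (fun a => ∑ q', mdpVal Phat G (H - (k + 1)) q' * Phat q a q')) :
    ∀ j ≤ H, ∀ q, |polVal P G σ H j q - mdpVal Phat G j q| ≤ (j : ℝ) * δ := by
  intro j
  induction j with
  | zero => intro _ q; simp [polVal, mdpVal]
  | succ j ih =>
    intro hjH q
    by_cases hq : q ∈ G
    · simp only [polVal, mdpVal, Set.indicator, hq, if_true, Set.mem_compl_iff,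
        not_true_eq_false, if_false, zero_mul, add_zero, sub_self, abs_zero]
      positivity
    · simp only [polVal, mdpVal, Set.indicator, hq, if_false, Set.mem_compl_iff,
        not_false_iff, if_true, zero_add, one_mul]
      set k := H - (j + 1) with hk
      have hkH : k < H := by omega
      have hk2 : H - (k + 1) = j := by omega
      have hg := hgreedy k hkH q
      rw [hk2] at hg
      rw [← hg]
      have : |∑ q', polVal P G σ H j q' * P q (σ k q) q' -
          ∑ q', mdpVal Phat G j q' * Phat q (σ k q) q'| ≤ (j : ℝ) * δ + δ := by
        apply sum_pert_bound _ _ _ _ _ _ (by positivity) (hP0 q _) (hP1 q _) (hTV q _)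
        · intro q'
          have := mdpVal_mem Phat G hPh0 hPh1 j q'
          rw [abs_of_nonneg this.1]; exact this.2
        · intro q'; exact ih (by omega) q'
      calc _ ≤ (j : ℝ) * δ + δ := this
        _ = ((j + 1 : ℕ) : ℝ) * δ := by push_cast; ring

end Main

theorem stmt13 {Q A : Type*} [Fintype Q] [Fintype A] [Nonempty A]
    (P Phat : Q → A → Q → ℝ) (G : Set Q) (H : ℕ)
    (hP0 : ∀ q a q', 0 ≤ P q a q') (hP1 : ∀ q a, ∑ q', P q a q' ≤ 1)
    (hPh0 : ∀ q a q', 0 ≤ Phat q a q') (hPh1 : ∀ q a, ∑ q', Phat q a q' ≤ 1)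
    (δ : ℝ) (hδ : 0 ≤ δ)
    (hTV : ∀ q a, ∑ q', |P q a q' - Phat q a q'| ≤ δ)
    (σ : ℕ → Q → A)
    (hgreedy : ∀ k < H, ∀ q,
        ∑ q', mdpVal Phat G (H - (k + 1)) q' * Phat q (σ k q) q' =
          Finset.univ.sup' Finset.univ_nonempty
            (fun a => ∑ q', mdpVal Phat G (H - (k + 1)) q' * Phat q a q')) :
    ∀ k ≤ H, ∀ q,
      |polVal P G σ H (H - k) q - mdpVal P G (H - k) q| ≤ 2 * ((H - k : ℕ) : ℝ) * δ := by
  intro k hk q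
  set j := H - k with hj
  have h1 := polVal_close P Phat G H hP0 hP1 hPh0 hPh1 δ hδ hTV σ hgreedy j (by omega) q
  have h2 := mdpVal_close P Phat G hP0 hP1 hPh0 hPh1 δ hδ hTV j q
  calc |polVal P G σ H j q - mdpVal P G j q|
      ≤ |polVal P G σ H j q - mdpVal Phat G j q| + |mdpVal Phat G j q - mdpVal P G j q| :=
        abs_sub_le _ _ _
    _ ≤ (j : ℝ) * δ + (j : ℝ) * δ := by
        rw [abs_sub_comm (mdpVal Phat G j q)]; exact add_le_add h1 h2
    _ = 2 * (j : ℝ) * δ := by ring
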